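/- Regarded as a ℤ/2ℤ-valued function of the rows a_0,…,a_n ∈ ℤ^n of the matrix A, the function B is symmetric modulo 2: for any two indices 0 ≤ i < j ≤ n, the value of B on the matrix obtained from A by interchanging rows i and j is congruent to B(A) modulo 2. -/
import Mathlib


open Matrix

/-- The strictly increasing embedding `Fin m → Fin (m + 2)` that skips the values
of `i` and `j` (for `i < j`): used to delete rows `i` and `j` of a matrix. -/
def skip2 {m : ℕ} (i j : Fin (m + 2)) (r : Fin m) : Fin (m + 2) :=
  if r.val < i.val then ⟨r.val, by have := r.isLt; omega⟩
  else if r.val + 1 < j.val then ⟨r.val + 1, by have := r.isLt; omega⟩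
  else ⟨r.val + 2, by have := r.isLt; omega⟩

/-- `B(A) = Σ_k Σ_{i<j} a_{ik} a_{jk} A^k_{ij}`, where `A^k_{ij}` is the determinant of
the matrix obtained from `A` by deleting rows `i`, `j` and column `k`. -/
def Bcoef {m : ℕ} (A : Matrix (Fin (m + 2)) (Fin (m + 1)) ℤ) : ℤ :=
  ∑ c : Fin (m + 1), ∑ i : Fin (m + 2), ∑ j : Fin (m + 2),
    if i < j then A i c * A j c * (A.submatrix (skip2 i j) c.succAbove).det else 0

lemma sign_cast_zmod2 {k : ℕ} (e : Equiv.Perm (Fin k)) :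
    ((Equiv.Perm.sign e : ℤ) : ZMod 2) = 1 := by
  rcases Int.units_eq_one_or (Equiv.Perm.sign e) with h | h <;> rw [h] <;> decide

lemma det_submatrix_congr {k : ℕ} {ι : Type*} (M : Matrix ι (Fin k) (ZMod 2))
    {f g : Fin k → ι} (hf : Function.Injective f) (hg : Function.Injective g)
    (hr : Set.range f = Set.range g) :
    (M.submatrix f id).det = (M.submatrix g id).det := by
  let e : Fin k ≃ Fin k :=
    (Equiv.ofInjective f hf).trans ((Equiv.setCongr hr).trans (Equiv.ofInjective g hg).symm)
  have he : ∀ r, g (e r) = f r := by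
    intro r
    simp only [e, Equiv.trans_apply, Equiv.apply_ofInjective_symm]
    rfl
  have h1 : (M.submatrix f id).det = ((M.submatrix g id).submatrix (⇑e) id).det := by
    congr 1; ext r c; simp [he r]
  rw [h1, Matrix.det_permute, sign_cast_zmod2 e, one_mul]

lemma skip2_injective {m : ℕ} {i j : Fin (m + 2)} (h : i < j) :
    Function.Injective (skip2 i j) := by
  intro a b hab
  unfold skip2 at hab
  apply Fin.ext
  split_ifs at hab <;> simp [Fin.ext_iff] at hab <;> omega

lemma skip2_range {m : ℕ} {i j : Fin (m + 2)} (h : i < j) :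
    Set.range (skip2 i j) = ({i, j} : Set (Fin (m + 2)))ᶜ := by
  have hij : i.val < j.val := h
  ext x
  simp only [Set.mem_range, Set.mem_compl_iff, Set.mem_insert_iff, Set.mem_singleton_iff]
  constructor
  · rintro ⟨r, rfl⟩
    unfold skip2
    have := r.isLt
    split_ifs <;> simp [Fin.ext_iff] <;> omega
  · intro hx
    rw [not_or] at hx
    obtain ⟨hxi, hxj⟩ := hx
    rw [Fin.ext_iff] at hxi hxj
    have hx2 := x.isLt
    have hj2 := j.isLt
    by_cases h1 : x.val < i.val
    · exact ⟨⟨x.val, by omega⟩, by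
        unfold skip2; simp only [Fin.val_mk]; split_ifs <;> simp [Fin.ext_iff] <;> omega⟩
    · by_cases h2 : x.val < j.val
      · exact ⟨⟨x.val - 1, by omega⟩, by
          unfold skip2; simp only [Fin.val_mk]; split_ifs <;> simp [Fin.ext_iff] <;> omega⟩
      · exact ⟨⟨x.val - 2, by omega⟩, by
          unfold skip2; simp only [Fin.val_mk]; split_ifs <;> simp [Fin.ext_iff] <;> omega⟩

lemma term_eq {m : ℕ} (N : Matrix (Fin (m + 2)) (Fin (m + 1)) (ZMod 2))
    (σ : Equiv.Perm (Fin (m + 2))) (c : Fin (m + 1)) {p q : Fin (m + 2)} (hpq : p < q) :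
    N (σ p) c * N (σ q) c * (((N.submatrix σ id)).submatrix (skip2 p q) c.succAbove).det
    = N (min (σ p) (σ q)) c * N (max (σ p) (σ q)) c *
      ((N.submatrix (skip2 (min (σ p) (σ q)) (max (σ p) (σ q))) c.succAbove).det) := by
  have huv : σ p ≠ σ q := σ.injective.ne (ne_of_lt hpq)
  have hmm : min (σ p) (σ q) < max (σ p) (σ q) := min_lt_max.mpr huv
  have hdet : (((N.submatrix σ id)).submatrix (skip2 p q) c.succAbove).det
      = (N.submatrix (skip2 (min (σ p) (σ q)) (max (σ p) (σ q))) c.succAbove).det := by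
    rw [Matrix.submatrix_submatrix]
    have e1 : N.submatrix (σ ∘ skip2 p q) (id ∘ c.succAbove)
        = (N.submatrix id c.succAbove).submatrix (σ ∘ skip2 p q) id := by
      simp [Matrix.submatrix_submatrix]
    have e2 : N.submatrix (skip2 (min (σ p) (σ q)) (max (σ p) (σ q))) c.succAbove
        = (N.submatrix id c.succAbove).submatrix
            (skip2 (min (σ p) (σ q)) (max (σ p) (σ q))) id := by
      simp [Matrix.submatrix_submatrix]
    rw [e1, e2]
    apply det_submatrix_congr
    · exact σ.injective.comp (skip2_injective hpq)
    · exact skip2_injective hmm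
    · rw [Set.range_comp, skip2_range hpq, skip2_range hmm, Set.image_compl_eq σ.bijective]
      congr 1
      rw [Set.image_insert_eq, Set.image_singleton]
      rcases le_total (σ p) (σ q) with h | h
      · rw [min_eq_left h, max_eq_right h]
      · rw [min_eq_right h, max_eq_left h, Set.pair_comm]
  rw [hdet]
  rcases le_total (σ p) (σ q) with h | h
  · rw [min_eq_left h, max_eq_right h]
  · rw [min_eq_right h, max_eq_left h]; ring

lemma key {m : ℕ} (N : Matrix (Fin (m + 2)) (Fin (m + 1)) (ZMod 2))
    (σ : Equiv.Perm (Fin (m + 2))) (c : Fin (m + 1)) :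
    (∑ p : Fin (m + 2), ∑ q : Fin (m + 2),
        if p < q then (N.submatrix σ id) p c * (N.submatrix σ id) q c *
          (((N.submatrix σ id)).submatrix (skip2 p q) c.succAbove).det else 0)
    = ∑ p : Fin (m + 2), ∑ q : Fin (m + 2),
        if p < q then N p c * N q c * ((N.submatrix (skip2 p q) c.succAbove).det) else 0 := by
  rw [← Finset.sum_product' (f := fun p q =>
        if p < q then (N.submatrix σ id) p c * (N.submatrix σ id) q c *
          (((N.submatrix σ id)).submatrix (skip2 p q) c.succAbove).det else 0),
      ← Finset.sum_product' (f := fun p q =>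
        if p < q then N p c * N q c * ((N.submatrix (skip2 p q) c.succAbove).det) else 0),
      ← Finset.sum_filter, ← Finset.sum_filter]
  refine Finset.sum_nbij' (fun x => (min (σ x.1) (σ x.2), max (σ x.1) (σ x.2)))
    (fun x => (min (σ.symm x.1) (σ.symm x.2), max (σ.symm x.1) (σ.symm x.2))) ?_ ?_ ?_ ?_ ?_
  · rintro ⟨p, q⟩ h
    simp only [Finset.mem_filter, Finset.mem_product, Finset.mem_univ, true_and] at h ⊢
    exact min_lt_max.mpr (σ.injective.ne (ne_of_lt h))
  · rintro ⟨p, q⟩ h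
    simp only [Finset.mem_filter, Finset.mem_product, Finset.mem_univ, true_and] at h ⊢
    exact min_lt_max.mpr (σ.symm.injective.ne (ne_of_lt h))
  · rintro ⟨p, q⟩ h
    simp only [Finset.mem_filter, Finset.mem_product, Finset.mem_univ, true_and] at h
    rcases le_total (σ p) (σ q) with h1 | h1
    · simp [min_eq_left h1, max_eq_right h1, min_eq_left h.le, max_eq_right h.le, Prod.ext_iff]
    · simp [min_eq_right h1, max_eq_left h1, min_eq_right h.le, max_eq_left h.le, Prod.ext_iff]
  · rintro ⟨p, q⟩ h
    simp only [Finset.mem_filter, Finset.mem_product, Finset.mem_univ, true_and] at h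
    rcases le_total (σ.symm p) (σ.symm q) with h1 | h1
    · simp [min_eq_left h1, max_eq_right h1, min_eq_left h.le, max_eq_right h.le, Prod.ext_iff]
    · simp [min_eq_right h1, max_eq_left h1, min_eq_right h.le, max_eq_left h.le, Prod.ext_iff]
  · rintro ⟨p, q⟩ h
    simp only [Finset.mem_filter, Finset.mem_product, Finset.mem_univ, true_and] at h
    simpa [Matrix.submatrix_apply] using term_eq N σ c h

lemma Bcoef_cast {m : ℕ} (B : Matrix (Fin (m + 2)) (Fin (m + 1)) ℤ) :
    ((Bcoef B : ℤ) : ZMod 2) = ∑ c : Fin (m + 1), ∑ p : Fin (m + 2), ∑ q : Fin (m + 2),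
      if p < q then (B.map (Int.cast : ℤ → ZMod 2)) p c * (B.map (Int.cast : ℤ → ZMod 2)) q c *
        (((B.map (Int.cast : ℤ → ZMod 2))).submatrix (skip2 p q) c.succAbove).det else 0 := by
  simp only [Bcoef, Int.cast_sum]
  refine Finset.sum_congr rfl fun c _ => Finset.sum_congr rfl fun p _ =>
    Finset.sum_congr rfl fun q _ => ?_
  rw [apply_ite (Int.cast : ℤ → ZMod 2), Int.cast_zero, Int.cast_mul, Int.cast_mul]
  congr 1
  congr 1
  rw [Matrix.submatrix_map]
  have := (Int.castRingHom (ZMod 2)).map_det (B.submatrix (skip2 p q) c.succAbove)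
  simpa [Matrix.map, RingHom.mapMatrix] using this

/-- Regarded as a `ℤ/2ℤ`-valued function of the rows of `A`, `B` is symmetric:
interchanging two rows `i < j` of `A` does not change `B` modulo `2`. -/
theorem Bcoef_symm_mod_two {m : ℕ} (A : Matrix (Fin (m + 2)) (Fin (m + 1)) ℤ)
    (i j : Fin (m + 2)) (hij : i < j) :
    Bcoef (A.submatrix (Equiv.swap i j) id) ≡ Bcoef A [ZMOD 2] := by
  suffices h : ((Bcoef (A.submatrix (⇑(Equiv.swap i j)) id) : ℤ) : ZMod 2)
      = ((Bcoef A : ℤ) : ZMod 2) by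
    have := (ZMod.intCast_eq_intCast_iff _ _ 2).mp h
    exact_mod_cast this
  rw [Bcoef_cast, Bcoef_cast]
  have hmap : (A.submatrix (⇑(Equiv.swap i j)) id).map (Int.cast : ℤ → ZMod 2)
      = (A.map (Int.cast : ℤ → ZMod 2)).submatrix (⇑(Equiv.swap i j)) id :=
    (Matrix.submatrix_map _ _ _ _).symm
  rw [hmap]
  exact Finset.sum_congr rfl fun c _ => key (A.map Int.cast) (Equiv.swap i j) c
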